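/- For every real z > 0: G_1^3(z) = (1/4)·z^{−1}·K_0(z/2)² + 2·z^{−2}·K_0(z/2)·K_1(z/2) + (1/4 + 4·z^{−2})·z^{−1}·K_1(z/2)², and G_1^5(z) = (1/4 + 6·z^{−2})·z^{−1}·K_0(z/2)² + (7/2 + 48·z^{−2})·z^{−2}·K_0(z/2)·K_1(z/2) + (1/4 + 10·z^{−2} + 96·z^{−4})·z^{−1}·K_1(z/2)². -/

import Mathlib

open Real MeasureTheory

/-- The modified Bessel function of the second kind, for `z > 0` and real order `ν`. -/
noncomputable def besselK (ν z : ℝ) : ℝ :=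
  ∫ t in Set.Ioi (0 : ℝ), Real.exp (-z * Real.cosh t) * Real.cosh (ν * t)

/-- `G_ν^N(z) = ∫_0^∞ cosh^N(t) K_ν(z cosh t) sinh²(t) dt`. -/
noncomputable def G (N : ℕ) (ν : ℝ) (z : ℝ) : ℝ :=
  ∫ t in Set.Ioi (0 : ℝ),
    Real.cosh t ^ N * besselK ν (z * Real.cosh t) * Real.sinh t ^ 2

section BKlemmas

open Set Filter Topology

lemma BK.one_add_sq_half_le_cosh (t : ℝ) : 1 + t ^ 2 / 2 ≤ Real.cosh t := by
  have h2 : Real.cosh t = 1 + 2 * Real.sinh (t / 2) ^ 2 := by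
    have h := Real.cosh_sq (t / 2)
    have h' := Real.cosh_two_mul (t / 2)
    have : 2 * (t / 2) = t := by ring
    rw [this] at h'
    nlinarith
  have h1 : (t / 2) ^ 2 ≤ Real.sinh (t / 2) ^ 2 := by
    rcases le_total 0 (t / 2) with h | h
    · nlinarith [Real.self_le_sinh_iff.mpr h]
    · nlinarith [Real.sinh_le_self_iff.mpr h, Real.sinh_nonpos_iff.mpr h]
  nlinarith

lemma BK.integrable_main {a : ℝ} (ha : 0 < a) (b : ℝ) :
    Integrable fun t : ℝ => Real.exp (b * t - a * Real.cosh t) := by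
  have hg : Integrable fun t : ℝ =>
      Real.exp (b ^ 2 / (2 * a) - a) * Real.exp (-(a / 2) * (t - b / a) ^ 2) :=
    ((integrable_exp_neg_mul_sq (half_pos ha)).comp_sub_right (b / a)).const_mul _
  refine hg.mono' (Continuous.aestronglyMeasurable (by fun_prop)) (ae_of_all _ fun t => ?_)
  rw [Real.norm_eq_abs, abs_of_nonneg (Real.exp_nonneg _), ← Real.exp_add]
  apply Real.exp_le_exp.mpr
  have h := BK.one_add_sq_half_le_cosh t
  have ha' : a ≠ 0 := ha.ne'
  have : b * t - a * (1 + t ^ 2 / 2) = b ^ 2 / (2 * a) - a + -(a / 2) * (t - b / a) ^ 2 := by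
    field_simp
    ring
  nlinarith [mul_le_mul_of_nonneg_left h ha.le]

lemma BK.integrableK {a : ℝ} (ha : 0 < a) (b : ℝ) :
    Integrable fun t : ℝ => Real.exp (-a * Real.cosh t) * Real.cosh (b * t) := by
  have h := ((BK.integrable_main ha b).add (BK.integrable_main ha (-b))).const_mul (1/2 : ℝ)
  refine h.congr (ae_of_all _ fun t => ?_)
  simp only [Pi.add_apply, Real.cosh_eq, sub_eq_add_neg, Real.exp_add, neg_mul, Real.exp_neg]
  ring

lemma BK.besselK_nonneg (ν z : ℝ) : 0 ≤ besselK ν z :=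
  integral_nonneg fun t => by positivity

lemma BK.besselK_neg (ν z : ℝ) : besselK (-ν) z = besselK ν z := by
  unfold besselK
  simp [neg_mul, Real.cosh_neg]

lemma BK.integral_fold {ψ : ℝ → ℝ} (hψ : Integrable ψ) :
    ∫ v, ψ v = ∫ v in Ioi (0 : ℝ), (ψ v + ψ (-v)) := by
  have h1 : ∫ v in Iic (0 : ℝ), ψ v = ∫ v in Ioi (0 : ℝ), ψ (-v) := by
    rw [show (0:ℝ) = -0 by norm_num, integral_comp_neg_Ioi]
    norm_num
  rw [← intervalIntegral.integral_Iic_add_Ioi hψ.integrableOn hψ.integrableOn, h1,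
    ← integral_add (hψ.comp_neg.integrableOn) hψ.integrableOn]
  congr 1
  ext v
  ring

lemma BK.besselK_eq_half_integral {z : ℝ} (hz : 0 < z) (ν : ℝ) :
    ∫ t : ℝ, Real.exp (ν * t - z * Real.cosh t) = 2 * besselK ν z := by
  rw [BK.integral_fold (BK.integrable_main hz ν)]
  unfold besselK
  rw [← integral_const_mul]
  refine setIntegral_congr_fun measurableSet_Ioi fun t _ => ?_
  simp only [Real.cosh_neg, Real.cosh_eq, sub_eq_add_neg, Real.exp_add, neg_mul, mul_neg,
    Real.exp_neg, neg_neg]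
  ring

lemma BK.integral_comp_affine (g : ℝ → ℝ) {c : ℝ} (hc : c ≠ 0) (d : ℝ) :
    ∫ v, g (c * v + d) = |c|⁻¹ * ∫ v, g v := by
  have h1 : ∫ v, (fun x => g (x + d)) (c * v) = |c⁻¹| • ∫ x, g (x + d) :=
    MeasureTheory.Measure.integral_comp_mul_left (fun x => g (x + d)) c
  simp only [integral_add_right_eq_self (fun x => g x) d] at h1
  simpa [abs_inv, smul_eq_mul] using h1

lemma BK.prod_formula {z : ℝ} (hz : 0 < z) (μ ν : ℝ) :
    besselK μ z * besselK ν z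
      = 2 * ∫ v in Ioi (0 : ℝ), besselK (μ + ν) (2 * z * Real.cosh v) * Real.cosh ((μ - ν) * v)
    ∧ IntegrableOn
        (fun v => besselK (μ + ν) (2 * z * Real.cosh v) * Real.cosh ((μ - ν) * v)) (Ioi 0) := by
  set F : ℝ → ℝ := fun s => Real.exp (μ * s - z * Real.cosh s) with hF_def
  set Gg : ℝ → ℝ := fun s => Real.exp (ν * s - z * Real.cosh s) with hG_def
  have hF : Integrable F := BK.integrable_main hz μ
  have hG : Integrable Gg := BK.integrable_main hz ν
  set Q : ℝ × ℝ → ℝ := fun p => F p.1 * Gg (p.1 - 2 * p.2) with hQ_def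
  have hQm : AEStronglyMeasurable Q ((volume : Measure ℝ).prod volume) := by
    apply Continuous.aestronglyMeasurable
    apply Continuous.mul
    · fun_prop
    · fun_prop
  have hGint_half : ∀ s : ℝ, ∫ v, Gg (s - 2 * v) = 2⁻¹ * ∫ v, Gg v := by
    intro s
    have h := BK.integral_comp_affine Gg (c := -2) (by norm_num) s
    simp only [show ∀ v : ℝ, -2 * v + s = s - 2 * v from fun v => by ring] at h
    rw [h]
    norm_num
  have hslice : ∀ s : ℝ, Integrable fun v : ℝ => F s * Gg (s - 2 * v) := by
    intro s
    have h1 : Integrable fun x : ℝ => Gg (s - x) := hG.comp_sub_left s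
    have h2 : Integrable fun v : ℝ => Gg (s - 2 * v) := h1.comp_mul_left' (by norm_num)
    exact h2.const_mul _
  have hQ : Integrable Q ((volume : Measure ℝ).prod volume) := by
    rw [integrable_prod_iff hQm]
    refine ⟨ae_of_all _ hslice, ?_⟩
    have heq : (fun s : ℝ => ∫ v : ℝ, ‖F s * Gg (s - 2 * v)‖)
        = fun s : ℝ => F s * (2⁻¹ * ∫ v, Gg v) := by
      funext s
      have : ∀ v : ℝ, ‖F s * Gg (s - 2 * v)‖ = F s * Gg (s - 2 * v) := fun v => by
        rw [Real.norm_eq_abs, abs_of_nonneg (by positivity)]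
      simp only [this, integral_const_mul, hGint_half s]
    rw [heq]
    exact hF.mul_const _
  -- value of the full double integral, computed first way
  have hval1 : ∫ p, Q p ∂((volume : Measure ℝ).prod volume)
      = 2 * (besselK μ z * besselK ν z) := by
    rw [integral_prod Q hQ]
    simp only [hQ_def]
    have : ∀ s : ℝ, ∫ v : ℝ, F s * Gg (s - 2 * v) = F s * (2⁻¹ * ∫ v, Gg v) := fun s => by
      rw [integral_const_mul, hGint_half s]
    simp only [this]
    rw [integral_mul_const, BK.besselK_eq_half_integral hz μ, BK.besselK_eq_half_integral hz ν]
    ring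
  -- the slice integral in s, for fixed v
  set ψ : ℝ → ℝ := fun v => 2 * besselK (μ + ν) (2 * z * Real.cosh v) * Real.exp ((μ - ν) * v)
    with hψ_def
  have hsval : ∀ v : ℝ, ∫ s : ℝ, Q (s, v) = ψ v := by
    intro v
    have hzv : 0 < 2 * z * Real.cosh v := by positivity
    have step1 : ∫ s : ℝ, Q (s, v)
        = ∫ u : ℝ, Real.exp ((μ + ν) * u - 2 * z * Real.cosh v * Real.cosh u)
            * Real.exp ((μ - ν) * v) := by
      rw [← integral_add_right_eq_self (fun s => Q (s, v)) v]
      refine integral_congr_ae (ae_of_all _ fun u => ?_)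
      have h1 : u + v - 2 * v = u - v := by ring
      simp only [hQ_def, hF_def, hG_def, h1]
      rw [← Real.exp_add, ← Real.exp_add]
      refine congrArg Real.exp ?_
      rw [Real.cosh_add, Real.cosh_sub]
      ring
    rw [step1, integral_mul_const, BK.besselK_eq_half_integral hzv (μ + ν), hψ_def]
  have hψint : Integrable ψ := by
    have h := hQ.integral_prod_right
    exact h.congr (ae_of_all _ hsval)
  have hval2 : ∫ p, Q p ∂((volume : Measure ℝ).prod volume) = ∫ v, ψ v := by
    rw [integral_prod Q hQ, integral_integral_swap (f := fun s v => Q (s, v)) hQ]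
    exact integral_congr_ae (ae_of_all _ hsval)
  have hpt : ∀ v : ℝ, ψ v + ψ (-v)
      = 4 * (besselK (μ + ν) (2 * z * Real.cosh v) * Real.cosh ((μ - ν) * v)) := by
    intro v
    simp only [hψ_def, Real.cosh_neg, mul_neg, Real.exp_neg]
    rw [show Real.cosh ((μ - ν) * v)
        = (Real.exp ((μ - ν) * v) + (Real.exp ((μ - ν) * v))⁻¹) / 2 by
      rw [Real.cosh_eq, Real.exp_neg]]
    ring
  have hfold : ∫ v, ψ v
      = 4 * ∫ v in Ioi (0 : ℝ), besselK (μ + ν) (2 * z * Real.cosh v)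
          * Real.cosh ((μ - ν) * v) := by
    rw [BK.integral_fold hψint, ← integral_const_mul]
    exact integral_congr_ae (ae_of_all _ fun v => hpt v)
  constructor
  · have := hval1.symm.trans (hval2.trans hfold)
    linarith
  · have h : IntegrableOn (fun v => (4⁻¹ : ℝ) * (ψ v + ψ (-v))) (Ioi 0) :=
      ((hψint.integrableOn (s := Ioi 0)).add
        (hψint.comp_neg.integrableOn (s := Ioi 0))).const_mul (4⁻¹ : ℝ)
    refine h.congr (ae_of_all _ fun v => ?_)
    have := hpt v
    simp only []
    linarith

lemma BK.abs_sinh_le_cosh (y : ℝ) : |Real.sinh y| ≤ Real.cosh y := by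
  nlinarith [Real.cosh_sq y, Real.cosh_pos y, sq_abs (Real.sinh y), abs_nonneg (Real.sinh y)]

lemma BK.cosh_le_exp_abs (y : ℝ) : Real.cosh y ≤ Real.exp |y| := by
  rw [Real.cosh_eq]
  have h1 := Real.exp_le_exp.mpr (le_abs_self y)
  have h2 := Real.exp_le_exp.mpr (neg_le_abs y)
  linarith

lemma BK.recurrence {x : ℝ} (hx : 0 < x) (ν : ℝ) :
    besselK (ν + 1) x = besselK (ν - 1) x + 2 * ν / x * besselK ν x := by
  set f : ℝ → ℝ := fun t => -(2 / x) * (Real.exp (-x * Real.cosh t) * Real.sinh (ν * t))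
    with hf_def
  set f' : ℝ → ℝ := fun t =>
    Real.exp (-x * Real.cosh t) * Real.cosh ((ν + 1) * t)
      - Real.exp (-x * Real.cosh t) * Real.cosh ((ν - 1) * t)
      - 2 * ν / x * (Real.exp (-x * Real.cosh t) * Real.cosh (ν * t)) with hf'_def
  have hderiv : ∀ t ∈ Ioi (0 : ℝ), HasDerivAt f (f' t) t := by
    intro t _
    have h1 : HasDerivAt (fun t : ℝ => -x * Real.cosh t) (-x * Real.sinh t) t :=
      (Real.hasDerivAt_cosh t).const_mul (-x)
    have h2 : HasDerivAt (fun t : ℝ => Real.exp (-x * Real.cosh t))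
        (Real.exp (-x * Real.cosh t) * (-x * Real.sinh t)) t := h1.exp
    have h3 : HasDerivAt (fun t : ℝ => Real.sinh (ν * t)) (Real.cosh (ν * t) * ν) t := by
      simpa using (HasDerivAt.sinh ((hasDerivAt_id t).const_mul ν))
    have h4 : HasDerivAt f (-(2 / x) * (Real.exp (-x * Real.cosh t) * (-x * Real.sinh t) * Real.sinh (ν * t)
        + Real.exp (-x * Real.cosh t) * (Real.cosh (ν * t) * ν))) t :=
      (h2.mul h3).const_mul (-(2 / x))
    convert h4 using 1
    have key : Real.cosh ((ν + 1) * t) - Real.cosh ((ν - 1) * t)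
        = 2 * Real.sinh (ν * t) * Real.sinh t := by
      have e1 : (ν + 1) * t = ν * t + t := by ring
      have e2 : (ν - 1) * t = ν * t - t := by ring
      rw [e1, e2, Real.cosh_add, Real.cosh_sub]
      ring
    simp only [hf'_def]
    linear_combination Real.exp (-x * Real.cosh t) * key
      + (-2 * Real.exp (-x * Real.cosh t) * Real.sinh (ν * t) * Real.sinh t)
        * (mul_inv_cancel₀ hx.ne' : x * x⁻¹ = 1)
  have hcont : ContinuousWithinAt f (Ici 0) 0 := by
    apply Continuous.continuousWithinAt
    fun_prop
  have htend : Tendsto f atTop (𝓝 0) := by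
    have h3 : Tendsto (fun t : ℝ => x / 2 * t) atTop atTop :=
      Tendsto.const_mul_atTop (half_pos hx) tendsto_id
    have h2 : Tendsto (fun t : ℝ => |ν| - x / 2 * t) atTop atBot := by
      have := Filter.tendsto_atBot_add_const_left atTop |ν| (tendsto_neg_atTop_atBot.comp h3)
      simpa [sub_eq_add_neg] using this
    have h1 : Tendsto (fun t : ℝ => t * (|ν| - x / 2 * t)) atTop atBot :=
      tendsto_id.atTop_mul_atBot₀ h2
    have h0 : Tendsto (fun t : ℝ => |ν| * t - x * (1 + t ^ 2 / 2)) atTop atBot := by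
      have := Filter.tendsto_atBot_add_const_right atTop (-x) h1
      refine this.congr' (Eventually.of_forall fun t => by ring)
    have hg : Tendsto (fun t : ℝ => 2 / x * Real.exp (|ν| * t - x * (1 + t ^ 2 / 2)))
        atTop (𝓝 0) := by
      have := (Real.tendsto_exp_atBot.comp h0).const_mul (2 / x)
      simpa using this
    refine squeeze_zero_norm' ?_ hg
    filter_upwards [eventually_ge_atTop (0 : ℝ)] with t ht
    have he : 0 < Real.exp (-x * Real.cosh t) := Real.exp_pos _
    have hb1 : |Real.sinh (ν * t)| ≤ Real.exp (|ν| * t) := by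
      refine (BK.abs_sinh_le_cosh _).trans ((BK.cosh_le_exp_abs _).trans ?_)
      rw [abs_mul, abs_of_nonneg ht]
    have hb2 : Real.exp (-x * Real.cosh t) ≤ Real.exp (-x * (1 + t ^ 2 / 2)) := by
      apply Real.exp_le_exp.mpr
      nlinarith [BK.one_add_sq_half_le_cosh t, hx]
    have hx2 : (0:ℝ) < 2 / x := by positivity
    simp only [hf_def, Real.norm_eq_abs, abs_mul, abs_neg, abs_of_pos hx2,
      abs_of_pos he]
    calc 2 / x * (Real.exp (-x * Real.cosh t) * |Real.sinh (ν * t)|)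
        ≤ 2 / x * (Real.exp (-x * (1 + t ^ 2 / 2)) * Real.exp (|ν| * t)) := by
          apply mul_le_mul_of_nonneg_left _ hx2.le
          exact mul_le_mul hb2 hb1 (abs_nonneg _) (Real.exp_nonneg _)
      _ = 2 / x * Real.exp (|ν| * t - x * (1 + t ^ 2 / 2)) := by
          rw [← Real.exp_add]
          ring_nf
  have hint1 := BK.integrableK hx (ν + 1)
  have hint2 := BK.integrableK hx (ν - 1)
  have hint3 := (BK.integrableK hx ν).const_mul (2 * ν / x)
  have hintf' : IntegrableOn f' (Ioi 0) :=
    ((hint1.sub hint2).sub hint3).integrableOn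
  have h0 := integral_Ioi_of_hasDerivAt_of_tendsto hcont hderiv hintf' htend
  have hf0 : f 0 = 0 := by simp [hf_def]
  rw [hf0, sub_zero] at h0
  have hsplit : ∫ t in Ioi (0 : ℝ), f' t
      = besselK (ν + 1) x - besselK (ν - 1) x - 2 * ν / x * besselK ν x := by
    have hint12 : Integrable (fun t : ℝ => Real.exp (-x * Real.cosh t) * Real.cosh ((ν + 1) * t)
        - Real.exp (-x * Real.cosh t) * Real.cosh ((ν - 1) * t)) := hint1.sub hint2
    simp only [hf'_def]
    rw [integral_sub hint12.integrableOn hint3.integrableOn,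
      integral_sub hint1.integrableOn hint2.integrableOn, integral_const_mul]
    rfl
  rw [hsplit] at h0
  linarith

lemma BK.alg3 (z K0 K1 : ℝ) (hz : z ≠ 0) :
    1/16 * ((K1 + 4/(z/2)*(K0 + 2/(z/2)*K1)) * (K0 + 2/(z/2)*K1) / 2)
      + 1/16 * ((K0 + 2/(z/2)*K1) * K1 / 2) - 1/8 * (K1*K0/2)
    = 1/4*z⁻¹*K0^2 + 2*(z^2)⁻¹*K0*K1 + (1/4+4*(z^2)⁻¹)*z⁻¹*K1^2 := by
  field_simp
  ring

lemma BK.alg5 (z K0 K1 : ℝ) (hz : z ≠ 0) :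
    1/64 * (((K0 + 2/(z/2)*K1) + 6/(z/2)*(K1 + 4/(z/2)*(K0 + 2/(z/2)*K1)))
        * (K1 + 4/(z/2)*(K0 + 2/(z/2)*K1)) / 2)
      + 3/64 * ((K1 + 4/(z/2)*(K0 + 2/(z/2)*K1)) * (K0 + 2/(z/2)*K1) / 2)
      + 1/64 * ((K0 + 2/(z/2)*K1) * K1 / 2) - 5/64 * (K1*K0/2)
    = (1/4 + 6*(z^2)⁻¹)*z⁻¹*K0^2 + (7/2 + 48*(z^2)⁻¹)*(z^2)⁻¹*K0*K1
      + (1/4 + 10*(z^2)⁻¹ + 96*(z^4)⁻¹)*z⁻¹*K1^2 := by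
  field_simp
  ring

lemma BK.cheb3 (t : ℝ) : Real.cosh t ^ 3 * Real.sinh t ^ 2
    = (Real.cosh (5 * t) + Real.cosh (3 * t) - 2 * Real.cosh t) / 16 := by
  have e5 : Real.exp (5 * t) = Real.exp t ^ 5 := by
    rw [show (5 : ℝ) * t = ((5 : ℕ) : ℝ) * t by norm_num, Real.exp_nat_mul]
  have e3 : Real.exp (3 * t) = Real.exp t ^ 3 := by
    rw [show (3 : ℝ) * t = ((3 : ℕ) : ℝ) * t by norm_num, Real.exp_nat_mul]
  simp only [Real.cosh_eq, Real.sinh_eq, Real.exp_neg, e5, e3]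
  have h := Real.exp_ne_zero t
  field_simp
  ring

lemma BK.cheb5 (t : ℝ) : Real.cosh t ^ 5 * Real.sinh t ^ 2
    = (Real.cosh (7 * t) + 3 * Real.cosh (5 * t) + Real.cosh (3 * t) - 5 * Real.cosh t) / 64 := by
  have e7 : Real.exp (7 * t) = Real.exp t ^ 7 := by
    rw [show (7 : ℝ) * t = ((7 : ℕ) : ℝ) * t by norm_num, Real.exp_nat_mul]
  have e5 : Real.exp (5 * t) = Real.exp t ^ 5 := by
    rw [show (5 : ℝ) * t = ((5 : ℕ) : ℝ) * t by norm_num, Real.exp_nat_mul]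
  have e3 : Real.exp (3 * t) = Real.exp t ^ 3 := by
    rw [show (3 : ℝ) * t = ((3 : ℕ) : ℝ) * t by norm_num, Real.exp_nat_mul]
  simp only [Real.cosh_eq, Real.sinh_eq, Real.exp_neg, e7, e5, e3]
  have h := Real.exp_ne_zero t
  field_simp
  ring


theorem G_exact_formulas (z : ℝ) (hz : 0 < z) :
    G 3 1 z =
      1 / 4 * z⁻¹ * besselK 0 (z / 2) ^ 2
        + 2 * (z ^ 2)⁻¹ * besselK 0 (z / 2) * besselK 1 (z / 2)
        + (1 / 4 + 4 * (z ^ 2)⁻¹) * z⁻¹ * besselK 1 (z / 2) ^ 2 ∧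
    G 5 1 z =
      (1 / 4 + 6 * (z ^ 2)⁻¹) * z⁻¹ * besselK 0 (z / 2) ^ 2
        + (7 / 2 + 48 * (z ^ 2)⁻¹) * (z ^ 2)⁻¹ * besselK 0 (z / 2) * besselK 1 (z / 2)
        + (1 / 4 + 10 * (z ^ 2)⁻¹ + 96 * (z ^ 4)⁻¹) * z⁻¹ * besselK 1 (z / 2) ^ 2 := by
  have hz2 : 0 < z / 2 := half_pos hz
  have hzz : 2 * (z / 2) = z := by ring
  -- the four product-formula instances (μ - ν = k, μ + ν = 1)
  have h1 := BK.prod_formula hz2 1 0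
  have h3 := BK.prod_formula hz2 2 (-1)
  have h5 := BK.prod_formula hz2 3 (-2)
  have h7 := BK.prod_formula hz2 4 (-3)
  rw [BK.besselK_neg] at h3 h5 h7
  norm_num [hzz] at h1 h3 h5 h7
  -- recurrences
  have e2 := BK.recurrence hz2 1
  have e3 := BK.recurrence hz2 2
  have e4 := BK.recurrence hz2 3
  norm_num at e2 e3 e4
  set K0 := besselK 0 (z / 2) with hK0
  set K1 := besselK 1 (z / 2) with hK1
  set K2 := besselK 2 (z / 2) with hK2
  set K3 := besselK 3 (z / 2) with hK3
  set K4 := besselK 4 (z / 2) with hK4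
  obtain ⟨hW1, hI1⟩ := h1
  obtain ⟨hW3, hI3⟩ := h3
  obtain ⟨hW5, hI5⟩ := h5
  obtain ⟨hW7, hI7⟩ := h7
  constructor
  · -- N = 3
    have hsplit : G 3 1 z
        = (1 / 16) * (∫ v in Ioi (0 : ℝ), besselK 1 (z * Real.cosh v) * Real.cosh (5 * v))
          + (1 / 16) * (∫ v in Ioi (0 : ℝ), besselK 1 (z * Real.cosh v) * Real.cosh (3 * v))
          - (1 / 8) * (∫ v in Ioi (0 : ℝ), besselK 1 (z * Real.cosh v) * Real.cosh v) := by
      unfold G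
      have hA : IntegrableOn (fun v : ℝ =>
          (1 / 16 : ℝ) * (besselK 1 (z * Real.cosh v) * Real.cosh (5 * v))
            + (1 / 16 : ℝ) * (besselK 1 (z * Real.cosh v) * Real.cosh (3 * v))) (Ioi 0) :=
        (hI5.const_mul _).add (hI3.const_mul _)
      rw [← integral_const_mul, ← integral_const_mul, ← integral_const_mul,
        ← integral_add (hI5.const_mul (1 / 16 : ℝ)) (hI3.const_mul (1 / 16 : ℝ)),
        ← integral_sub hA (hI1.const_mul (1 / 8 : ℝ))]
      refine integral_congr_ae (ae_of_all _ fun t => ?_)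
      linear_combination besselK 1 (z * Real.cosh t) * BK.cheb3 t
    rw [hsplit]
    have hv5 : (∫ v in Ioi (0 : ℝ), besselK 1 (z * Real.cosh v) * Real.cosh (5 * v))
        = K3 * K2 / 2 := by linarith
    have hv3 : (∫ v in Ioi (0 : ℝ), besselK 1 (z * Real.cosh v) * Real.cosh (3 * v))
        = K2 * K1 / 2 := by linarith
    have hv1 : (∫ v in Ioi (0 : ℝ), besselK 1 (z * Real.cosh v) * Real.cosh v)
        = K1 * K0 / 2 := by linarith
    rw [hv5, hv3, hv1, e3, e2]
    exact BK.alg3 z K0 K1 hz.ne'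
  · -- N = 5
    have hsplit : G 5 1 z
        = (1 / 64) * (∫ v in Ioi (0 : ℝ), besselK 1 (z * Real.cosh v) * Real.cosh (7 * v))
          + (3 / 64) * (∫ v in Ioi (0 : ℝ), besselK 1 (z * Real.cosh v) * Real.cosh (5 * v))
          + (1 / 64) * (∫ v in Ioi (0 : ℝ), besselK 1 (z * Real.cosh v) * Real.cosh (3 * v))
          - (5 / 64) * (∫ v in Ioi (0 : ℝ), besselK 1 (z * Real.cosh v) * Real.cosh v) := by
      unfold G
      have hA : IntegrableOn (fun v : ℝ =>
          (1 / 64 : ℝ) * (besselK 1 (z * Real.cosh v) * Real.cosh (7 * v))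
            + (3 / 64 : ℝ) * (besselK 1 (z * Real.cosh v) * Real.cosh (5 * v))) (Ioi 0) :=
        (hI7.const_mul _).add (hI5.const_mul _)
      have hB : IntegrableOn (fun v : ℝ =>
          ((1 / 64 : ℝ) * (besselK 1 (z * Real.cosh v) * Real.cosh (7 * v))
            + (3 / 64 : ℝ) * (besselK 1 (z * Real.cosh v) * Real.cosh (5 * v)))
            + (1 / 64 : ℝ) * (besselK 1 (z * Real.cosh v) * Real.cosh (3 * v))) (Ioi 0) :=
        hA.add (hI3.const_mul _)
      rw [← integral_const_mul, ← integral_const_mul, ← integral_const_mul, ← integral_const_mul,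
        ← integral_add (hI7.const_mul (1 / 64 : ℝ)) (hI5.const_mul (3 / 64 : ℝ)),
        ← integral_add hA (hI3.const_mul (1 / 64 : ℝ)),
        ← integral_sub hB (hI1.const_mul (5 / 64 : ℝ))]
      refine integral_congr_ae (ae_of_all _ fun t => ?_)
      linear_combination besselK 1 (z * Real.cosh t) * BK.cheb5 t
    rw [hsplit]
    have hv7 : (∫ v in Ioi (0 : ℝ), besselK 1 (z * Real.cosh v) * Real.cosh (7 * v))
        = K4 * K3 / 2 := by linarith
    have hv5 : (∫ v in Ioi (0 : ℝ), besselK 1 (z * Real.cosh v) * Real.cosh (5 * v))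
        = K3 * K2 / 2 := by linarith
    have hv3 : (∫ v in Ioi (0 : ℝ), besselK 1 (z * Real.cosh v) * Real.cosh (3 * v))
        = K2 * K1 / 2 := by linarith
    have hv1 : (∫ v in Ioi (0 : ℝ), besselK 1 (z * Real.cosh v) * Real.cosh v)
        = K1 * K0 / 2 := by linarith
    rw [hv7, hv5, hv3, hv1, e4, e3, e2]
    exact BK.alg5 z K0 K1 hz.ne'

end BKlemmas
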